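/- arXiv:1208.1271 — 4 statements merged into one kernel-verified Lean document; each statement's English description precedes it below -/
import Mathlib

section
/- The generalized Eulerian polynomials satisfy the duplication identity A_n(a², b²) = ∑_{k=0}^{n} binom(n,k) (1+a)^k A_k(a,b) A_{n-k}(-a,b) (1-a)^{n-k}, arising from the factorization (1-a²)/((b²)^{t(1-a²)} - a²) = [(1-a)/(b^{t(1-a²)} - a)] · [(1+a)/(b^{t(1-a²)} + a)]. -/
open Finset

/-- Uniqueness of coefficients of a convergent complex power series. -/
lemma coeff_eq_of_hasSum_aux {c d : ℕ → ℂ} {f : ℂ → ℂ} {r : ℝ} (hr : 0 < r)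
    (hc : ∀ t : ℂ, ‖t‖ < r → HasSum (fun n => c n * t ^ n) (f t))
    (hd : ∀ t : ℂ, ‖t‖ < r → HasSum (fun n => d n * t ^ n) (f t)) : c = d := by
  have key : ∀ (e : ℕ → ℂ), (∀ t : ℂ, ‖t‖ < r → HasSum (fun n => e n * t ^ n) (f t)) →
      HasFPowerSeriesOnBall f (FormalMultilinearSeries.ofScalars ℂ e) 0 (ENNReal.ofReal r) := by
    intro e he
    refine ⟨?_, by simpa using hr, ?_⟩
    · refine ENNReal.le_of_forall_nnreal_lt fun r' hr' => ?_
      have hr'r : (r' : ℝ) < r := by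
        have := (ENNReal.lt_ofReal_iff_toReal_lt (by simp)).mp hr'
        simpa using this
      have hsum : Summable fun n => e n * (r' : ℂ) ^ n :=
        (he (r' : ℂ) (by simpa using hr'r)).summable
      have hnorm : Summable fun n => ‖e n * (r' : ℂ) ^ n‖ :=
        summable_norm_iff.mpr hsum
      refine FormalMultilinearSeries.le_radius_of_summable _ ?_
      refine hnorm.congr fun n => ?_
      rw [FormalMultilinearSeries.ofScalars_norm, norm_mul, norm_pow]
      simp
    · intro y hy
      rw [EMetric.mem_ball, edist_zero_right, ← ofReal_norm,
        ENNReal.ofReal_lt_ofReal_iff hr] at hy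
      have := he y hy
      simp only [zero_add]
      refine this.congr_fun fun n => ?_
      rw [FormalMultilinearSeries.ofScalars_apply_eq, smul_eq_mul]
  have h1 := (key c hc).hasFPowerSeriesAt
  have h2 := (key d hd).hasFPowerSeriesAt
  have := h1.eq_formalMultilinearSeries h2
  exact FormalMultilinearSeries.ofScalars_series_injective ℂ ℂ this

theorem genEulerian_duplication
    (A : ℂ → ℝ → ℕ → ℂ)
    (hA : ∀ (a : ℂ) (b : ℝ), 0 < b → a ≠ 1 → ∃ r > (0:ℝ), ∀ t : ℂ, ‖t‖ < r →
      HasSum (fun n : ℕ => A a b n * t ^ n / (n.factorial : ℂ))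
        ((1 - a) / (Complex.exp (t * (1 - a) * (Real.log b : ℂ)) - a)))
    (a : ℂ) (b : ℝ) (hb : 0 < b) (ha : a ≠ 1) (ha' : a ≠ -1)
    (ha2 : a ^ 2 ≠ 1) (n : ℕ) :
    A (a ^ 2) (b ^ 2) n = ∑ k ∈ Finset.range (n + 1),
      (Nat.choose n k : ℂ) * (1 + a) ^ k * A a b k * A (-a) b (n - k) * (1 - a) ^ (n - k) := by
  obtain ⟨r1, hr1, h1⟩ := hA a b hb ha
  obtain ⟨r2, hr2, h2⟩ := hA (-a) b hb (fun h => ha' (neg_eq_iff_eq_neg.mp h))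
  obtain ⟨r3, hr3, h3⟩ := hA (a ^ 2) (b ^ 2) (by positivity) ha2
  set c : ℕ → ℂ := fun n => A (a ^ 2) (b ^ 2) n / n.factorial with hc_def
  set d : ℕ → ℂ := fun n => (∑ k ∈ Finset.range (n + 1),
      (Nat.choose n k : ℂ) * (1 + a) ^ k * A a b k * A (-a) b (n - k) * (1 - a) ^ (n - k))
      / n.factorial with hd_def
  set f : ℂ → ℂ := fun t =>
      (1 - a ^ 2) / (Complex.exp (t * (1 - a ^ 2) * (Real.log (b ^ 2) : ℂ)) - a ^ 2) with hf_def
  set r : ℝ := min r3 (min (r1 / (1 + ‖1 + a‖)) (r2 / (1 + ‖1 - a‖))) with hr_def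
  have hpos1 : (0:ℝ) < 1 + ‖1 + a‖ := by positivity
  have hpos2 : (0:ℝ) < 1 + ‖1 - a‖ := by positivity
  have hr : 0 < r := by
    refine lt_min hr3 (lt_min ?_ ?_) <;> positivity
  have hc : ∀ t : ℂ, ‖t‖ < r → HasSum (fun n => c n * t ^ n) (f t) := by
    intro t ht
    have := h3 t (lt_of_lt_of_le ht (min_le_left _ _))
    refine this.congr_fun fun n => ?_
    simp only [hc_def]
    ring
  have hd : ∀ t : ℂ, ‖t‖ < r → HasSum (fun n => d n * t ^ n) (f t) := by
    intro t ht
    have ht1 : ‖t * (1 + a)‖ < r1 := by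
      rw [norm_mul]
      calc ‖t‖ * ‖1 + a‖ ≤ ‖t‖ * (1 + ‖1 + a‖) := by
            exact mul_le_mul_of_nonneg_left (by linarith) (norm_nonneg _)
        _ < r1 / (1 + ‖1 + a‖) * (1 + ‖1 + a‖) := by
            refine mul_lt_mul_of_pos_right ?_ hpos1
            exact lt_of_lt_of_le ht ((min_le_right _ _).trans (min_le_left _ _))
        _ = r1 := by field_simp
    have ht2 : ‖t * (1 - a)‖ < r2 := by
      rw [norm_mul]
      calc ‖t‖ * ‖1 - a‖ ≤ ‖t‖ * (1 + ‖1 - a‖) := by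
            exact mul_le_mul_of_nonneg_left (by linarith) (norm_nonneg _)
        _ < r2 / (1 + ‖1 - a‖) * (1 + ‖1 - a‖) := by
            refine mul_lt_mul_of_pos_right ?_ hpos2
            exact lt_of_lt_of_le ht ((min_le_right _ _).trans (min_le_right _ _))
        _ = r2 := by field_simp
    have H1 := h1 (t * (1 + a)) ht1
    have H2 := h2 (t * (1 - a)) ht2
    -- rewrite the two series in Cauchy-product-friendly form
    set u : ℕ → ℂ := fun k => A a b k * (1 + a) ^ k * t ^ k / k.factorial with hu_def
    set v : ℕ → ℂ := fun m => A (-a) b m * (1 - a) ^ m * t ^ m / m.factorial with hv_def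
    have Hu : HasSum u ((1 - a) /
        (Complex.exp (t * (1 + a) * (1 - a) * (Real.log b : ℂ)) - a)) := by
      have := H1
      rw [show t * (1 + a) * (1 - a) * (Real.log b : ℂ)
          = (t * (1 + a)) * (1 - a) * (Real.log b : ℂ) by ring]
      refine this.congr_fun fun k => ?_
      simp only [hu_def, mul_pow]
      ring
    have Hv : HasSum v ((1 + a) /
        (Complex.exp (t * (1 + a) * (1 - a) * (Real.log b : ℂ)) + a)) := by
      have := H2
      rw [show (t * (1 - a)) * (1 - (-a)) * (Real.log b : ℂ)
          = t * (1 + a) * (1 - a) * (Real.log b : ℂ) by ring] at this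
      simp only [sub_neg_eq_add] at this
      refine this.congr_fun fun m => ?_
      simp only [hv_def, mul_pow]
      ring
    have hun : Summable fun k => ‖u k‖ := summable_norm_iff.mpr Hu.summable
    have hvn : Summable fun m => ‖v m‖ := summable_norm_iff.mpr Hv.summable
    have Hprod := hasSum_sum_range_mul_of_summable_norm hun hvn
    rw [Hu.tsum_eq, Hv.tsum_eq] at Hprod
    -- identify the product of the sums with f t
    have hexp : f t = ((1 - a) /
          (Complex.exp (t * (1 + a) * (1 - a) * (Real.log b : ℂ)) - a)) *
        ((1 + a) /
          (Complex.exp (t * (1 + a) * (1 - a) * (Real.log b : ℂ)) + a)) := by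
      set x : ℂ := t * (1 + a) * (1 - a) * (Real.log b : ℂ) with hx_def
      rw [div_mul_div_comm]
      have hnum : (1 - a) * (1 + a) = 1 - a ^ 2 := by ring
      have hden : (Complex.exp x - a) * (Complex.exp x + a)
          = Complex.exp (t * (1 - a ^ 2) * (Real.log (b ^ 2) : ℂ)) - a ^ 2 := by
        have hlog : (Real.log (b ^ 2) : ℂ) = 2 * (Real.log b : ℂ) := by
          rw [Real.log_pow]
          push_cast
          ring
        rw [hlog, show t * (1 - a ^ 2) * (2 * (Real.log b : ℂ)) = x + x by rw [hx_def]; ring,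
          Complex.exp_add]
        ring
      rw [hf_def, hnum, hden]
    rw [hexp]
    refine Hprod.congr_fun fun m => ?_
    -- show the Cauchy coefficient equals d m * t ^ m
    simp only [hd_def, hu_def, hv_def]
    rw [Finset.sum_div, Finset.sum_mul]
    refine Finset.sum_congr rfl fun k hk => ?_
    have hkm : k ≤ m := Finset.mem_range_succ_iff.mp hk
    have hfact : (m.choose k : ℂ) * (k.factorial : ℂ) * ((m - k).factorial : ℂ)
        = (m.factorial : ℂ) := by
      have := Nat.choose_mul_factorial_mul_factorial hkm
      push_cast [← this]
      ring
    have hk0 : (k.factorial : ℂ) ≠ 0 := Nat.cast_ne_zero.mpr k.factorial_ne_zero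
    have hmk0 : ((m - k).factorial : ℂ) ≠ 0 := Nat.cast_ne_zero.mpr (m - k).factorial_ne_zero
    have hm0 : (m.factorial : ℂ) ≠ 0 := Nat.cast_ne_zero.mpr m.factorial_ne_zero
    have htpow : t ^ k * t ^ (m - k) = t ^ m := by
      rw [← pow_add, Nat.add_sub_cancel' hkm]
    field_simp
    rw [← htpow, ← hfact]
    ring
  have := congrFun (coeff_eq_of_hasSum_aux hr hc hd) n
  simp only [hc_def, hd_def] at this
  have hn0 : (n.factorial : ℂ) ≠ 0 := Nat.cast_ne_zero.mpr n.factorial_ne_zero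
  field_simp at this
  exact this
end

section
/- The polylogarithm of negative integer order satisfies Li_{-n}(x) = ∑_{k=0}^n k! S(n+1, k+1) (x/(1-x))^{k+1} for |x| < 1, where S(n,k) denotes the Stirling numbers of the second kind and Li_{-n}(x) = ∑_{j=1}^∞ j^n x^j. -/
open Finset

/-- Stirling numbers of the second kind `S(n,k)`. -/
def stirling2 : ℕ → ℕ → ℕ
  | 0, 0 => 1
  | 0, _ + 1 => 0
  | _ + 1, 0 => 0
  | n + 1, k + 1 => (k + 1) * stirling2 n (k + 1) + stirling2 n k

lemma stirling2_eq_zero_of_lt : ∀ n k : ℕ, n < k → stirling2 n k = 0 := by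
  intro n
  induction n with
  | zero => intro k hk; match k, hk with | k + 1, _ => rfl
  | succ n ih =>
    intro k hk
    match k, hk with
    | k + 1, hk =>
      show (k + 1) * stirling2 n (k + 1) + stirling2 n k = 0
      rw [ih (k + 1) (by omega), ih k (by omega)]
      simp

lemma key_choose (j k : ℕ) :
    (j + 1) * j.choose k = (k + 1) * j.choose k + (k + 1) * j.choose (k + 1) := by
  have h1 : (j + 1) * j.choose k = (j + 1).choose (k + 1) * (k + 1) :=
    Nat.add_one_mul_choose_eq j k
  rw [h1, Nat.choose_succ_succ]
  ring

lemma lemA (n : ℕ) : ∀ j : ℕ, (j + 1) ^ n =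
    ∑ k ∈ Finset.range (n + 1), k.factorial * stirling2 (n + 1) (k + 1) * j.choose k := by
  induction n with
  | zero =>
    intro j
    simp [stirling2]
  | succ n ih =>
    intro j
    have hstep : (j + 1) ^ (n + 1) =
        (∑ k ∈ Finset.range (n + 1), k.factorial * stirling2 (n + 1) (k + 1) * j.choose k)
          * (j + 1) := by
      rw [pow_succ, ih j]
    rw [hstep, Finset.sum_mul]
    have hterm : ∀ k : ℕ,
        k.factorial * stirling2 (n + 1) (k + 1) * j.choose k * (j + 1) =
          (k + 1).factorial * stirling2 (n + 1) (k + 1) * j.choose k +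
          (k + 1).factorial * stirling2 (n + 1) (k + 1) * j.choose (k + 1) := by
      intro k
      have := key_choose j k
      calc k.factorial * stirling2 (n + 1) (k + 1) * j.choose k * (j + 1)
          = k.factorial * stirling2 (n + 1) (k + 1) * ((j + 1) * j.choose k) := by ring
        _ = k.factorial * stirling2 (n + 1) (k + 1) *
              ((k + 1) * j.choose k + (k + 1) * j.choose (k + 1)) := by rw [this]
        _ = (k + 1).factorial * stirling2 (n + 1) (k + 1) * j.choose k +
            (k + 1).factorial * stirling2 (n + 1) (k + 1) * j.choose (k + 1) := by
            rw [Nat.factorial_succ]; ring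
    rw [Finset.sum_congr rfl (fun k _ => hterm k), Finset.sum_add_distrib]
    have hR : ∀ k : ℕ, k.factorial * stirling2 (n + 1 + 1) (k + 1) * j.choose k =
        (k + 1).factorial * stirling2 (n + 1) (k + 1) * j.choose k +
        k.factorial * stirling2 (n + 1) k * j.choose k := by
      intro k
      show k.factorial * ((k + 1) * stirling2 (n + 1) (k + 1) + stirling2 (n + 1) k)
            * j.choose k = _
      rw [Nat.factorial_succ]; ring
    rw [Finset.sum_congr rfl (fun k _ => hR k), Finset.sum_add_distrib]
    congr 1
    · -- A: extend sum from range (n+1) to range (n+2); extra term is zero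
      rw [eq_comm, Finset.sum_range_succ, stirling2_eq_zero_of_lt (n + 1) (n + 2) (by omega)]
      simp
    · -- B: shift index
      rw [eq_comm, Finset.sum_range_succ']
      have h0 : stirling2 (n + 1) 0 = 0 := rfl
      simp [h0]

lemma hasSum_choose (x : ℝ) (hx : |x| < 1) (k : ℕ) :
    HasSum (fun j : ℕ => (j.choose k : ℝ) * x ^ (j + 1)) ((x / (1 - x)) ^ (k + 1)) := by
  have hx' : ‖x‖ < 1 := by rwa [Real.norm_eq_abs]
  have h := (hasSum_choose_mul_geometric_of_norm_lt_one (𝕜 := ℝ) k hx').mul_left (x ^ (k + 1))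
  have h3 : HasSum (fun n : ℕ => (((n + k).choose k : ℝ)) * x ^ (n + k + 1))
      ((x / (1 - x)) ^ (k + 1)) := by
    have hne : (1 - x) ≠ 0 := by
      intro h0
      have : x = 1 := by linarith
      rw [this] at hx; norm_num at hx
    convert h using 2 with j
    · rfl
    · rw [show j + k + 1 = (k + 1) + j by ring, pow_add]; ring
    · rw [div_pow]; field_simp
  have := (hasSum_nat_add_iff (f := fun j : ℕ => (j.choose k : ℝ) * x ^ (j + 1)) k).1 h3
  have hzero : ∑ i ∈ Finset.range k, ((i.choose k : ℝ)) * x ^ (i + 1) = 0 := by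
    apply Finset.sum_eq_zero
    intro i hi
    rw [Nat.choose_eq_zero_of_lt (Finset.mem_range.1 hi)]
    simp
  rwa [hzero, add_zero] at this

theorem polylog_neg_stirling (n : ℕ) (x : ℝ) (hx : |x| < 1) :
    ∑' j : ℕ, ((j : ℝ) + 1) ^ n * x ^ (j + 1) =
      ∑ k ∈ Finset.range (n + 1),
        (Nat.factorial k : ℝ) * (stirling2 (n + 1) (k + 1) : ℝ) * (x / (1 - x)) ^ (k + 1) := by
  have H : HasSum (fun j : ℕ => ((j : ℝ) + 1) ^ n * x ^ (j + 1))
      (∑ k ∈ Finset.range (n + 1),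
        (Nat.factorial k : ℝ) * (stirling2 (n + 1) (k + 1) : ℝ) * (x / (1 - x)) ^ (k + 1)) := by
    have hsum := hasSum_sum (f := fun (k : ℕ) (j : ℕ) =>
        (Nat.factorial k : ℝ) * (stirling2 (n + 1) (k + 1) : ℝ) * ((j.choose k : ℝ) * x ^ (j + 1)))
      (s := Finset.range (n + 1))
      (fun k _ => (hasSum_choose x hx k).mul_left _)
    convert hsum using 1
    funext j
    have := congrArg (fun m : ℕ => (m : ℝ)) (lemA n j)
    push_cast at this
    rw [show ((j : ℝ) + 1) ^ n * x ^ (j + 1) =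
      (((j : ℝ) + 1) ^ n) * x ^ (j + 1) from rfl, this, Finset.sum_mul]
    apply Finset.sum_congr rfl
    intro k _
    ring
  exact H.tsum_eq
end

section
/- For n ≥ 1 and b > 0, the Abel-summed value of A_n(-1,b) satisfies A_n(-1, b) = 2^{n+1} (ln b)^n · lim_{x→1⁻} ∑_{j=1}^∞ (-1)^j j^n x^j, i.e., A_n(-1,b) = 2^n (ln b)^n ζ_E(-n) where ζ_E(s) = 2 ∑_{j≥1} (-1)^j j^{-s} (interpreted by analytic continuation / Abel summation). -/
open Filter Topology Finset


noncomputable def Hfun : ℕ → ℝ → ℝ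
  | 0 => fun y => y / (1 - y)
  | (n+1) => fun y =>
      (y + y * ∑ i ∈ (Finset.range (n+1)).attach, ((n+1).choose i.1 : ℝ) * Hfun i.1 y) / (1 - y)
  decreasing_by exact Finset.mem_range.mp i.2

lemma Hfun_zero (y : ℝ) : Hfun 0 y = y / (1 - y) := by rw [Hfun]

lemma Hfun_succ (n : ℕ) (y : ℝ) :
    Hfun (n+1) y
      = (y + y * ∑ i ∈ Finset.range (n+1), ((n+1).choose i : ℝ) * Hfun i y) / (1 - y) := by
  rw [Hfun]
  rw [← Finset.sum_attach (Finset.range (n+1)) (fun i => ((n+1).choose i : ℝ) * Hfun i y)]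

lemma binom_diff (n : ℕ) (x : ℝ) :
    (x + 1) ^ (n+1) - x ^ (n+1)
      = ∑ i ∈ Finset.range (n+1), x ^ i * ((n+1).choose i : ℝ) := by
  have hbin : (x + 1) ^ (n+1) = ∑ i ∈ Finset.range (n+2), x ^ i * ((n+1).choose i : ℝ) := by
    simpa using add_pow x (1:ℝ) (n+1)
  rw [hbin, Finset.sum_range_succ]
  simp

lemma hasSum_Hfun : ∀ (n : ℕ) (y : ℝ), |y| < 1 →
    HasSum (fun k : ℕ => ((k : ℝ) + 1) ^ n * y ^ (k + 1)) (Hfun n y) := by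
  intro n
  induction n using Nat.strong_induction_on with
  | _ n ih =>
    intro y hy
    match n with
    | 0 =>
      have h := (hasSum_geometric_of_abs_lt_one hy).mul_left y
      rw [Hfun_zero, div_eq_mul_inv]
      convert h using 2 with k
      · rfl
      · ring
    | (n+1) =>
      have hy1 : (1 : ℝ) - y ≠ 0 := by
        have := abs_lt.mp hy
        linarith [this.2]
      have hsummable : Summable (fun k : ℕ => ((k : ℝ) + 1) ^ (n+1) * y ^ (k + 1)) := by
        have h0 : Summable (fun m : ℕ => (m : ℝ) ^ (n+1) * y ^ m) :=
          summable_pow_mul_geometric_of_norm_lt_one (n+1) (by rwa [Real.norm_eq_abs])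
        have := h0.comp_injective Nat.succ_injective
        refine this.congr fun k => ?_
        simp only [Function.comp, Nat.succ_eq_add_one]
        push_cast
        ring
      set S := ∑' k : ℕ, ((k : ℝ) + 1) ^ (n+1) * y ^ (k + 1) with hSdef
      have hS : HasSum (fun k : ℕ => ((k : ℝ) + 1) ^ (n+1) * y ^ (k + 1)) S :=
        hsummable.hasSum
      have h1 : HasSum (fun k : ℕ => ((k : ℝ) + 1) ^ (n+1) * y ^ (k + 2)) (y * S) := by
        have := hS.mul_left y
        refine this.congr_fun fun k => ?_
        ring
      have h2 : HasSum (fun k : ℕ => ((k : ℝ) + 2) ^ (n+1) * y ^ (k + 2)) (S - y) := by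
        have := (hasSum_nat_add_iff' (f := fun k : ℕ => ((k : ℝ) + 1) ^ (n+1) * y ^ (k + 1)) 1).mpr hS
        simp only [Finset.range_one, Finset.sum_singleton] at this
        have h' : (((0:ℕ) : ℝ) + 1) ^ (n+1) * y ^ (0 + 1) = y := by norm_num
        rw [h'] at this
        refine this.congr_fun fun k => ?_
        push_cast
        ring_nf
      have h3 := h2.sub h1
      have h4 : HasSum
          (fun k : ℕ => ∑ i ∈ Finset.range (n+1),
            (((n+1).choose i : ℝ) * y) * (((k : ℝ) + 1) ^ i * y ^ (k + 1)))
          (∑ i ∈ Finset.range (n+1), (((n+1).choose i : ℝ) * y) * Hfun i y) := by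
        refine hasSum_sum fun i hi => ?_
        exact (ih i (Finset.mem_range.mp hi) y hy).mul_left _
      have heq : ∀ k : ℕ,
          ∑ i ∈ Finset.range (n+1),
            (((n+1).choose i : ℝ) * y) * (((k : ℝ) + 1) ^ i * y ^ (k + 1))
          = ((k : ℝ) + 2) ^ (n+1) * y ^ (k + 2) - ((k : ℝ) + 1) ^ (n+1) * y ^ (k + 2) := by
        intro k
        have hb := binom_diff n ((k : ℝ) + 1)
        have hk2 : ((k : ℝ) + 2) = ((k : ℝ) + 1) + 1 := by ring
        rw [hk2]
        calc ∑ i ∈ Finset.range (n+1),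
              (((n+1).choose i : ℝ) * y) * ((((k : ℝ) + 1)) ^ i * y ^ (k + 1))
            = (∑ i ∈ Finset.range (n+1), ((k : ℝ) + 1) ^ i * ((n+1).choose i : ℝ)) * y ^ (k+2) := by
              rw [Finset.sum_mul]
              refine Finset.sum_congr rfl fun i _ => ?_
              ring
          _ = ((((k : ℝ) + 1) + 1) ^ (n+1) - ((k : ℝ) + 1) ^ (n+1)) * y ^ (k+2) := by rw [← hb]
          _ = _ := by ring
      have h5 : HasSum
          (fun k : ℕ => ((k : ℝ) + 2) ^ (n+1) * y ^ (k + 2) - ((k : ℝ) + 1) ^ (n+1) * y ^ (k + 2))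
          (∑ i ∈ Finset.range (n+1), (((n+1).choose i : ℝ) * y) * Hfun i y) :=
        h4.congr_fun fun k => (heq k).symm
      have hval : S - y - y * S = ∑ i ∈ Finset.range (n+1), (((n+1).choose i : ℝ) * y) * Hfun i y :=
        h3.unique h5
      have hfinal : S = Hfun (n+1) y := by
        rw [Hfun_succ]
        have hsum : ∑ i ∈ Finset.range (n+1), (((n+1).choose i : ℝ) * y) * Hfun i y
            = y * ∑ i ∈ Finset.range (n+1), ((n+1).choose i : ℝ) * Hfun i y := by
          rw [Finset.mul_sum]
          exact Finset.sum_congr rfl fun i _ => by ring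
        rw [hsum] at hval
        field_simp
        linarith [hval]
      exact hfinal ▸ hS

lemma continuousAt_Hfun : ∀ n : ℕ, ContinuousAt (Hfun n) (-1 : ℝ) := by
  intro n
  induction n using Nat.strong_induction_on with
  | _ n ih =>
    match n with
    | 0 =>
      have : ContinuousAt (fun y : ℝ => y / (1 - y)) (-1) := by
        apply ContinuousAt.div continuousAt_id (continuousAt_const.sub continuousAt_id)
        norm_num
      exact this.congr (by filter_upwards with y using (Hfun_zero y).symm)
    | (n+1) =>
      have hc : ContinuousAt (fun y : ℝ =>
          (y + y * ∑ i ∈ Finset.range (n+1), ((n+1).choose i : ℝ) * Hfun i y) / (1 - y)) (-1) := by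
        apply ContinuousAt.div
        · apply continuousAt_id.add
          apply continuousAt_id.mul
          apply tendsto_finset_sum
          intro i hi
          exact (continuousAt_const.mul (ih i (Finset.mem_range.mp hi)))
        · exact continuousAt_const.sub continuousAt_id
        · norm_num
      exact hc.congr (by filter_upwards with y using (Hfun_succ n y).symm)

lemma Hfun_zero_neg_one : Hfun 0 (-1) = -(1/2) := by rw [Hfun_zero]; norm_num

-- recurrence for d at -1
noncomputable def dR : ℕ → ℝ := fun m => if m = 0 then 1 else 2 * Hfun m (-1)

lemma dR_rec (n : ℕ) :
    2 * dR (n+1) = -∑ k ∈ Finset.range (n+1), ((n+1).choose k : ℝ) * dR k := by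
  have hsum : ∑ k ∈ Finset.range (n+1), ((n+1).choose k : ℝ) * dR k
      = (∑ k ∈ Finset.range (n+1), ((n+1).choose k : ℝ) * (2 * Hfun k (-1))) + 2 := by
    have : ∑ k ∈ Finset.range (n+1), (((n+1).choose k : ℝ) * dR k
        - ((n+1).choose k : ℝ) * (2 * Hfun k (-1))) = 2 := by
      rw [Finset.sum_eq_single 0]
      · simp [dR, Hfun_zero_neg_one]
        norm_num
      · intro k hk hk0
        simp [dR, hk0]
      · intro h
        exact absurd (Finset.mem_range.mpr (Nat.succ_pos n)) h
    have hs := Finset.sum_sub_distrib (s := Finset.range (n+1))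
      (f := fun k => ((n+1).choose k : ℝ) * dR k)
      (g := fun k => ((n+1).choose k : ℝ) * (2 * Hfun k (-1)))
    rw [hs] at this
    linarith
  have hH : Hfun (n+1) (-1)
      = (-1 + -1 * ∑ i ∈ Finset.range (n+1), ((n+1).choose i : ℝ) * Hfun i (-1)) / 2 := by
    rw [Hfun_succ]; norm_num
  have hd : dR (n+1) = 2 * Hfun (n+1) (-1) := by simp [dR]
  rw [hd, hH, hsum]
  have : ∑ k ∈ Finset.range (n+1), ((n+1).choose k : ℝ) * (2 * Hfun k (-1))
      = 2 * ∑ i ∈ Finset.range (n+1), ((n+1).choose i : ℝ) * Hfun i (-1) := by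
    rw [Finset.mul_sum]
    exact Finset.sum_congr rfl fun i _ => by ring
  rw [this]
  ring


lemma abs_summable_smaller {u : ℕ → ℂ} {t0 : ℂ} (h : Summable (fun k => u k * t0 ^ k))
    {t : ℂ} (ht : ‖t‖ < ‖t0‖) : Summable (fun k => ‖u k * t ^ k‖) := by
  have ht0 : 0 < ‖t0‖ := lt_of_le_of_lt (norm_nonneg t) ht
  obtain ⟨M, hM⟩ := h.tendsto_atTop_zero.norm.bddAbove_range
  set q : ℝ := ‖t‖ / ‖t0‖ with hq
  have hq0 : 0 ≤ q := div_nonneg (norm_nonneg _) (norm_nonneg _)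
  have hq1 : q < 1 := (div_lt_one ht0).mpr ht
  have hbound : ∀ k, ‖u k * t ^ k‖ ≤ M * q ^ k := by
    intro k
    have h1 : ‖u k * t ^ k‖ = ‖u k * t0 ^ k‖ * q ^ k := by
      rw [norm_mul, norm_mul, norm_pow, norm_pow, hq, div_pow]
      have hne : ‖t0‖ ^ k * (‖t‖ ^ k / ‖t0‖ ^ k) = ‖t‖ ^ k := by
        rw [mul_div_assoc', mul_comm, mul_div_assoc,
          div_self (by positivity : ‖t0‖ ^ k ≠ 0), mul_one]
      rw [mul_assoc, hne]
    rw [h1]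
    exact mul_le_mul_of_nonneg_right (hM (Set.mem_range_self k)) (pow_nonneg hq0 k)
  exact Summable.of_nonneg_of_le (fun k => norm_nonneg _) hbound
    ((summable_geometric_of_lt_one hq0 hq1).mul_left M)

lemma ofScalars_coeff (c : ℕ → ℂ) (m : ℕ) :
    (FormalMultilinearSeries.ofScalars ℂ c).coeff m = c m := by
  rw [FormalMultilinearSeries.coeff]
  rw [show (1 : Fin m → ℂ) = fun _ => (1:ℂ) from rfl]
  rw [FormalMultilinearSeries.ofScalars_apply_eq]
  simp

theorem genEulerian_neg_one_euler_zeta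
    (A : ℂ → ℝ → ℕ → ℂ)
    (hA : ∀ (a : ℂ) (b : ℝ), 0 < b → a ≠ 1 → ∃ r > (0:ℝ), ∀ t : ℂ, ‖t‖ < r →
      HasSum (fun n : ℕ => A a b n * t ^ n / (n.factorial : ℂ))
        ((1 - a) / (Complex.exp (t * (1 - a) * (Real.log b : ℂ)) - a)))
    (b : ℝ) (hb : 0 < b) (n : ℕ) (hn : 1 ≤ n) :
    ∃ L : ℝ, Tendsto (fun x : ℝ => ∑' j : ℕ, (-1 : ℝ) ^ (j + 1) * ((j : ℝ) + 1) ^ n * x ^ (j + 1))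
        (𝓝[<] (1 : ℝ)) (𝓝 L) ∧
      A (-1) b n = 2 ^ (n + 1) * (Real.log b : ℂ) ^ n * (L : ℂ) := by
  refine ⟨Hfun n (-1), ?_, ?_⟩
  · -- Tendsto part
    have hneg : Tendsto (fun x : ℝ => -x) (𝓝[<] (1:ℝ)) (𝓝 (-1 : ℝ)) :=
      (continuous_neg.tendsto 1).mono_left nhdsWithin_le_nhds
    have h1 : Tendsto (fun x : ℝ => Hfun n (-x)) (𝓝[<] (1:ℝ)) (𝓝 (Hfun n (-1))) :=
      Filter.Tendsto.comp (continuousAt_Hfun n) hneg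
    refine h1.congr' ?_
    filter_upwards [Ioo_mem_nhdsLT_of_mem (show (1:ℝ) ∈ Set.Ioc (-1:ℝ) 1 by constructor <;> norm_num)] with x hx
    have hx' : |(-x)| < 1 := by
      rw [abs_neg]
      exact abs_lt.mpr ⟨hx.1, hx.2⟩
    have hhs := hasSum_Hfun n (-x) hx'
    have heq : (fun j : ℕ => ((j:ℝ)+1) ^ n * (-x) ^ (j+1))
        = fun j : ℕ => (-1:ℝ) ^ (j+1) * ((j:ℝ)+1) ^ n * x ^ (j+1) := by
      funext j
      rw [neg_pow]
      ring
    rw [heq] at hhs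
    exact hhs.tsum_eq.symm
  · -- complex part
    set lb : ℂ := (Real.log b : ℂ) with hlb
    obtain ⟨r, hr, hsum⟩ := hA (-1) b hb (by norm_num)
    set c : ℂ := 2 * lb with hc
    set a : ℕ → ℂ := fun k => A (-1) b k / (k.factorial : ℂ) with ha
    set e : ℕ → ℂ := fun k => c ^ k / (k.factorial : ℂ) with he
    have has_a : ∀ t : ℂ, ‖t‖ < r → HasSum (fun k : ℕ => a k * t ^ k)
        (2 / (Complex.exp (c * t) + 1)) := by
      intro t ht
      have h0 := hsum t ht
      have h1 : (1 : ℂ) - (-1) = 2 := by norm_num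
      have harg : t * (1 - (-1)) * lb = c * t := by rw [h1, hc]; ring
      rw [harg, h1, sub_neg_eq_add] at h0
      refine h0.congr_fun fun k => ?_
      rw [ha]
      ring
    have hexp : ∀ t : ℂ, HasSum (fun k : ℕ => e k * t ^ k) (Complex.exp (c * t)) := by
      intro t
      have h0 := NormedSpace.expSeries_div_hasSum_exp (c * t)
      rw [← Complex.exp_eq_exp_ℂ] at h0
      refine h0.congr_fun fun k => ?_
      rw [he, mul_pow]
      ring
    set δ : ℝ := min (r/2) (1/(4*‖lb‖+1)) with hδ
    have hδpos : 0 < δ := by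
      apply lt_min (by linarith)
      positivity
    have hδr2 : δ ≤ r/2 := min_le_left _ _
    have hδlb : δ ≤ 1/(4*‖lb‖+1) := min_le_right _ _
    have hden : ∀ t : ℂ, ‖t‖ < δ → Complex.exp (c * t) + 1 ≠ 0 := by
      intro t ht
      have hz : ‖c * t‖ ≤ 1/2 := by
        rw [norm_mul, hc, norm_mul]
        have h2 : ‖(2:ℂ)‖ = 2 := by norm_num
        rw [h2]
        have hlbnn : (0:ℝ) ≤ ‖lb‖ := norm_nonneg _
        have ht' : ‖t‖ ≤ 1/(4*‖lb‖+1) := le_of_lt (lt_of_lt_of_le ht hδlb)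
        calc 2 * ‖lb‖ * ‖t‖ ≤ 2 * ‖lb‖ * (1/(4*‖lb‖+1)) := by
              apply mul_le_mul_of_nonneg_left ht' (by positivity)
          _ ≤ 1/2 := by
              rw [mul_one_div, div_le_div_iff₀ (by positivity) (by norm_num)]
              nlinarith
      have hexp1 : ‖Complex.exp (c*t) - 1‖ ≤ 2 * ‖c*t‖ := by
        have := Complex.norm_exp_sub_one_le (x := c*t)
          (by linarith)
        exact this
      intro hcontra
      have hEm : Complex.exp (c*t) - 1 = -2 := by linear_combination hcontra
      rw [hEm] at hexp1
      have : ‖(-2 : ℂ)‖ = 2 := by norm_num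
      rw [this] at hexp1
      linarith
    -- the combined HasSum
    have hv : ∀ t : ℂ, ‖t‖ < δ → HasSum
        (fun m : ℕ => ((∑ k ∈ Finset.range (m+1), a k * e (m-k)) + a m) * t ^ m) 2 := by
      intro t ht
      have htr : ‖t‖ < r := lt_of_lt_of_le (lt_of_lt_of_le ht hδr2) (by linarith)
      have habs_a : Summable (fun k => ‖a k * t ^ k‖) := by
        refine abs_summable_smaller (t0 := ((3*r/4 : ℝ) : ℂ)) ?_ ?_
        · exact (has_a ((3*r/4 : ℝ) : ℂ) (by
            rw [Complex.norm_real, Real.norm_eq_abs, abs_of_pos (by linarith)]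
            linarith)).summable
        · rw [Complex.norm_real, Real.norm_eq_abs, abs_of_pos (by linarith)]
          have := lt_of_lt_of_le ht hδr2
          linarith
      have habs_e : Summable (fun k => ‖e k * t ^ k‖) := by
        refine abs_summable_smaller (t0 := ((‖t‖ + 1 : ℝ) : ℂ)) ?_ ?_
        · exact (hexp _).summable
        · rw [Complex.norm_real, Real.norm_eq_abs,
            abs_of_pos (by positivity)]
          linarith
      have hC := hasSum_sum_range_mul_of_summable_norm habs_a habs_e
      rw [(has_a t htr).tsum_eq, (hexp t).tsum_eq] at hC
      have hCC : HasSum (fun m : ℕ =>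
          (∑ k ∈ Finset.range (m+1), a k * e (m-k)) * t ^ m)
          (2 / (Complex.exp (c * t) + 1) * Complex.exp (c * t)) := by
        refine hC.congr_fun fun m => ?_
        rw [Finset.sum_mul]
        refine Finset.sum_congr rfl fun k hk => ?_
        have hk' : k ≤ m := Nat.lt_succ_iff.mp (Finset.mem_range.mp hk)
        have : t ^ k * t ^ (m - k) = t ^ m := by
          rw [← pow_add, Nat.add_sub_cancel' hk']
        calc a k * e (m-k) * t ^ m = a k * e (m-k) * (t ^ k * t ^ (m-k)) := by rw [this]
          _ = a k * t ^ k * (e (m-k) * t ^ (m-k)) := by ring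
      have hsum2 := hCC.add (has_a t htr)
      have hval : 2 / (Complex.exp (c * t) + 1) * Complex.exp (c * t)
          + 2 / (Complex.exp (c * t) + 1) = 2 := by
        have hd := hden t ht
        field_simp
      rw [hval] at hsum2
      refine hsum2.congr_fun fun m => ?_
      ring
    -- power series uniqueness
    set v : ℕ → ℂ := fun m => (∑ k ∈ Finset.range (m+1), a k * e (m-k)) + a m with hvdef
    set u : ℕ → ℂ := fun m => if m = 0 then 2 else 0 with hu
    have hps1 : HasFPowerSeriesAt (fun _ : ℂ => (2:ℂ))
        (FormalMultilinearSeries.ofScalars ℂ v) 0 := by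
      rw [hasFPowerSeriesAt_iff]
      filter_upwards [Metric.ball_mem_nhds 0 hδpos] with t ht
      rw [Metric.mem_ball, dist_zero_right] at ht
      have := hv t ht
      refine this.congr_fun fun m => ?_
      rw [ofScalars_coeff, smul_eq_mul]
      ring
    have hps2 : HasFPowerSeriesAt (fun _ : ℂ => (2:ℂ))
        (FormalMultilinearSeries.ofScalars ℂ u) 0 := by
      rw [hasFPowerSeriesAt_iff]
      filter_upwards [Metric.ball_mem_nhds 0 one_pos] with t ht
      have h0 : HasSum (fun m : ℕ => if m = 0 then (2:ℂ) else 0) 2 := hasSum_ite_eq 0 2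
      refine h0.congr_fun fun m => ?_
      rw [ofScalars_coeff, smul_eq_mul, hu]
      by_cases hm : m = 0
      · subst hm; simp
      · simp [hm]
    have hveq : v = u := by
      have := hps1.eq_formalMultilinearSeries hps2
      exact (FormalMultilinearSeries.ofScalars_series_eq_iff (𝕜 := ℂ) ℂ (c := v) u).mp this
    -- extract recurrences
    have he0 : e 0 = 1 := by simp [he]
    have ha0 : a 0 = 1 := by
      have h0 := congrFun hveq 0
      simp only [hvdef, hu, if_pos rfl, zero_add, Finset.range_one, Finset.sum_singleton,
        Nat.sub_self] at h0
      rw [he0, mul_one] at h0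
      linear_combination h0/2
    have harec : ∀ m : ℕ, 1 ≤ m →
        2 * a m = -∑ k ∈ Finset.range m, a k * e (m - k) := by
      intro m hm
      have h0 := congrFun hveq m
      have hm0 : m ≠ 0 := Nat.one_le_iff_ne_zero.mp hm
      simp only [hvdef, hu, if_neg hm0] at h0
      rw [Finset.sum_range_succ, Nat.sub_self, he0, mul_one] at h0
      linear_combination h0
    have hfactid : ∀ m k : ℕ, k ≤ m →
        e k * e (m - k) = (m.choose k : ℂ) * c ^ m / (m.factorial : ℂ) := by
      intro m k hk
      have hck : c ^ k * c ^ (m - k) = c ^ m := by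
        rw [← pow_add, Nat.add_sub_cancel' hk]
      have hfact : (m.choose k : ℂ) * (k.factorial : ℂ) * ((m - k).factorial : ℂ)
          = (m.factorial : ℂ) := by
        exact_mod_cast congrArg (fun x : ℕ => (x : ℂ)) (Nat.choose_mul_factorial_mul_factorial hk)
      have hk0 : (k.factorial : ℂ) ≠ 0 := Nat.cast_ne_zero.mpr k.factorial_ne_zero
      have hmk0 : ((m - k).factorial : ℂ) ≠ 0 := Nat.cast_ne_zero.mpr (m - k).factorial_ne_zero
      have hm0 : (m.factorial : ℂ) ≠ 0 := Nat.cast_ne_zero.mpr m.factorial_ne_zero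
      rw [he, div_mul_div_comm, hck]
      rw [div_eq_div_iff (mul_ne_zero hk0 hmk0) hm0]
      linear_combination (-((2:ℂ) ^ m * lb ^ m)) * hfact
    have hkey : ∀ m : ℕ, a m = (dR m : ℂ) * c ^ m / (m.factorial : ℂ) := by
      intro m
      induction m using Nat.strong_induction_on with
      | _ m ih =>
        match m with
        | 0 => simp [ha0, dR]
        | (j+1) =>
          have hrec := harec (j+1) (Nat.succ_le_succ (Nat.zero_le j))
          have hsum_eq : ∑ k ∈ Finset.range (j+1), a k * e (j+1-k)
              = (∑ k ∈ Finset.range (j+1), ((j+1).choose k : ℂ) * (dR k : ℂ))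
                  * c ^ (j+1) / ((j+1).factorial : ℂ) := by
            rw [Finset.sum_mul, Finset.sum_div]
            refine Finset.sum_congr rfl fun k hk => ?_
            have hk' : k ≤ j + 1 := le_of_lt (Finset.mem_range.mp hk)
            rw [ih k (Finset.mem_range.mp hk)]
            have hek : e k = c ^ k / (k.factorial : ℂ) := by rw [he]
            calc (dR k : ℂ) * c ^ k / (k.factorial : ℂ) * e (j+1-k)
                = (dR k : ℂ) * (e k * e (j+1-k)) := by rw [hek]; ring
              _ = (dR k : ℂ) * (((j+1).choose k : ℂ) * c ^ (j+1) / ((j+1).factorial : ℂ)) := by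
                  rw [hfactid (j+1) k hk']
              _ = ((j+1).choose k : ℂ) * (dR k : ℂ) * c ^ (j+1) / ((j+1).factorial : ℂ) := by
                  ring
          have hdrecC : (2 : ℂ) * (dR (j+1) : ℂ)
              = -∑ k ∈ Finset.range (j+1), ((j+1).choose k : ℂ) * (dR k : ℂ) := by
            exact_mod_cast congrArg (fun x : ℝ => (x : ℂ)) (dR_rec j)
          rw [hsum_eq] at hrec
          have hfin : 2 * a (j+1) = (2 * (dR (j+1) : ℂ)) * c ^ (j+1) / ((j+1).factorial : ℂ) := by
            rw [hdrecC, hrec]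
            ring
          linear_combination hfin/2
    have hfne : (n.factorial : ℂ) ≠ 0 := Nat.cast_ne_zero.mpr n.factorial_ne_zero
    have hAn : A (-1) b n = a n * (n.factorial : ℂ) := by
      rw [ha]
      rw [div_mul_cancel₀ _ hfne]
    have hdRn : dR n = 2 * Hfun n (-1) := by
      simp [dR, Nat.one_le_iff_ne_zero.mp hn]
    rw [hAn, hkey n]
    rw [div_mul_cancel₀ _ hfne]
    have hfinal : ((dR n : ℝ) : ℂ) * c ^ n = 2 ^ (n+1) * lb ^ n * ((Hfun n (-1) : ℝ) : ℂ) := by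
      rw [hdRn, hc]
      push_cast
      ring
    rw [hfinal]
end

section
/- Witt's formula: for an odd prime p, all n ≥ 0, and b > 0, A_n(-1, b) = (ln b)^n 2^n ∫_{ℤ_p} υ^n dμ_{-1}(υ), where the fermionic p-adic integral is I_{-1}(f) = lim_{N→∞} ∑_{υ=0}^{p^N - 1} (-1)^υ f(υ). In particular ∫_{ℤ_p} υ^n dμ_{-1}(υ) = E_n, the n-th Euler number. -/
open Filter Topology Finset

section WittAux

variable {𝕜 : Type*} [NontriviallyNormedField 𝕜] {F : Type*} [NormedAddCommGroup F]
  [NormedSpace 𝕜 F]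

private lemma coeffs_eq_zero_of_hasSum {a : ℕ → F} {r : ℝ} (hr : 0 < r)
    (h : ∀ t : 𝕜, ‖t‖ < r → HasSum (fun n => t ^ n • a n) 0) : ∀ n, a n = 0 := by
  obtain ⟨t₀, ht₀pos, ht₀r⟩ := NormedField.exists_norm_lt 𝕜 hr
  have ht₀ : t₀ ≠ 0 := by simpa using norm_pos_iff.mp ht₀pos
  set p : FormalMultilinearSeries 𝕜 𝕜 F :=
    fun n => ContinuousMultilinearMap.mkPiRing 𝕜 (Fin n) (a n) with hp
  have hpn : ∀ (n : ℕ) (y : 𝕜), (p n fun _ => y) = y ^ n • a n := by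
    intro n y
    simp [hp, ContinuousMultilinearMap.mkPiRing_apply]
  have hrad : (‖t₀‖₊ : ENNReal) ≤ p.radius := by
    apply p.le_radius_of_tendsto (l := 0)
    have hnorm : ∀ n, ‖p n‖ = ‖a n‖ := fun n => ContinuousMultilinearMap.norm_mkPiRing (a n)
    have := (h t₀ ht₀r).summable.tendsto_atTop_zero.norm
    simpa [hnorm, norm_smul, mul_comm] using this
  have hball : HasFPowerSeriesOnBall (fun _ : 𝕜 => (0 : F)) p 0 ‖t₀‖₊ := by
    refine ⟨hrad, ?_, ?_⟩
    · simpa using norm_pos_iff.mpr ht₀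
    · intro y hy
      rw [EMetric.mem_ball, edist_zero_right] at hy
      have hy' : ‖y‖ < r := lt_trans (by exact_mod_cast hy) ht₀r
      simpa [hpn] using h y hy'
  have hz : p = 0 := hball.hasFPowerSeriesAt.eq_zero
  intro n
  have := hpn n 1
  rw [hz] at this
  simpa using this.symm

private lemma coeffs_eq_of_hasSum {a b : ℕ → F} {r : ℝ} (hr : 0 < r)
    (h : ∀ t : 𝕜, ‖t‖ < r → ∃ s, HasSum (fun n => t ^ n • a n) s ∧
      HasSum (fun n => t ^ n • b n) s) :
    ∀ n, a n = b n := by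
  intro n
  have := coeffs_eq_zero_of_hasSum (a := fun n => a n - b n) hr (fun t ht => by
    obtain ⟨s, h1, h2⟩ := h t ht
    simpa [smul_sub] using h1.sub h2) n
  exact sub_eq_zero.mp this

private lemma abs_summable_of_summable_ball {c : ℕ → ℝ} {r : ℝ}
    (h : ∀ t : ℝ, |t| < r → Summable fun n => c n * t ^ n) {t : ℝ} (ht : |t| < r) :
    Summable fun n => ‖c n * t ^ n‖ := by
  have h0 : (0:ℝ) ≤ |t| := abs_nonneg t
  obtain ⟨ρ, hρ1, hρr⟩ : ∃ ρ, |t| < ρ ∧ ρ < r := ⟨(|t| + r) / 2, by linarith, by linarith⟩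
  have hρ0 : 0 < ρ := lt_of_le_of_lt h0 hρ1
  have hsum := h ρ (by rw [abs_of_pos hρ0]; linarith)
  obtain ⟨C, hC⟩ : ∃ C, ∀ n, ‖c n * ρ ^ n‖ ≤ C := by
    obtain ⟨C, hC⟩ := hsum.tendsto_atTop_zero.norm.bddAbove_range
    exact ⟨C, fun n => hC ⟨n, rfl⟩⟩
  have hlt : |t| / ρ < 1 := (div_lt_one hρ0).mpr hρ1
  refine Summable.of_nonneg_of_le (fun n => norm_nonneg _) (fun n => ?_)
    (((summable_geometric_of_lt_one (by positivity) hlt)).mul_left C)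
  have key : ‖c n * t ^ n‖ = ‖c n * ρ ^ n‖ * (|t| / ρ) ^ n := by
    rw [norm_mul, norm_mul, norm_pow, norm_pow, Real.norm_eq_abs t, Real.norm_eq_abs ρ,
      abs_of_pos hρ0, div_pow]
    field_simp
  rw [key]
  exact mul_le_mul_of_nonneg_right (hC n) (by positivity)

private lemma witt_euler_recurrence {E : ℕ → ℚ} {r : ℝ} (hr : 0 < r)
    (hsum : ∀ t : ℝ, |t| < r →
      HasSum (fun n : ℕ => (E n : ℝ) * t ^ n / (n.factorial : ℝ)) (2 / (Real.exp t + 1))) :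
    ∀ n, (∑ k ∈ range (n + 1), (n.choose k : ℝ) * (E k : ℝ)) + (E n : ℝ)
      = if n = 0 then 2 else 0 := by
  set c : ℕ → ℝ := fun n => (E n : ℝ) / n.factorial with hc
  set d : ℕ → ℝ := fun n => 1 / n.factorial + if n = 0 then 1 else 0 with hd
  have hcsum : ∀ t : ℝ, |t| < r → HasSum (fun n => c n * t ^ n) (2 / (Real.exp t + 1)) := by
    intro t ht
    have hfun : (fun n => c n * t ^ n) = fun n => (E n : ℝ) * t ^ n / n.factorial := by
      funext n; rw [hc]; ring
    rw [hfun]; exact hsum t ht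
  have hdsum : ∀ t : ℝ, HasSum (fun n => d n * t ^ n) (Real.exp t + 1) := by
    intro t
    have h1 : HasSum (fun n : ℕ => t ^ n / n.factorial) (Real.exp t) := by
      rw [Real.exp_eq_exp_ℝ]; exact NormedSpace.expSeries_div_hasSum_exp t
    have h2 : HasSum (fun n : ℕ => if n = 0 then (1:ℝ) else 0) 1 := by
      simpa using hasSum_ite_eq 0 (1:ℝ)
    have h3 := h1.add h2
    have hfun : (fun n => d n * t ^ n)
        = fun n : ℕ => t ^ n / n.factorial + if n = 0 then (1:ℝ) else 0 := by
      funext n; rw [hd]; by_cases hn : n = 0 <;> simp [hn] <;> ring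
    rw [hfun]; exact h3
  have hside : ∀ t : ℝ, |t| < r → ∃ s,
      HasSum (fun n => t ^ n • (∑ kl ∈ Finset.HasAntidiagonal.antidiagonal n, c kl.1 * d kl.2)) s ∧
      HasSum (fun n : ℕ => t ^ n • (if n = 0 then (2:ℝ) else 0)) s := by
    intro t ht
    refine ⟨2, ?_, ?_⟩
    · have hf := hcsum t ht
      have hg := hdsum t
      have hf' : Summable fun n => ‖c n * t ^ n‖ :=
        abs_summable_of_summable_ball (fun u hu => (hcsum u hu).summable) ht
      have hg' : Summable fun n => ‖d n * t ^ n‖ :=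
        abs_summable_of_summable_ball (r := |t| + 1) (fun u _ => (hdsum u).summable)
          (lt_add_one _)
      have hsummable := summable_sum_mul_antidiagonal_of_summable_norm' hf' hf.summable
        hg' hg.summable
      have htsum := tsum_mul_tsum_eq_tsum_sum_antidiagonal_of_summable_norm hf' hg'
      rw [hf.tsum_eq, hg.tsum_eq] at htsum
      have h2 : (2 / (Real.exp t + 1)) * (Real.exp t + 1) = 2 :=
        div_mul_cancel₀ _ (ne_of_gt (by positivity))
      have hhs : HasSum
          (fun n => ∑ kl ∈ Finset.HasAntidiagonal.antidiagonal n,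
            (c kl.1 * t ^ kl.1) * (d kl.2 * t ^ kl.2)) 2 := by
        have h4 := hsummable.hasSum
        rwa [← htsum, h2] at h4
      have hfun : (fun n => ∑ kl ∈ Finset.HasAntidiagonal.antidiagonal n,
            (c kl.1 * t ^ kl.1) * (d kl.2 * t ^ kl.2))
          = fun n => t ^ n • (∑ kl ∈ Finset.HasAntidiagonal.antidiagonal n, c kl.1 * d kl.2) := by
        funext n
        rw [smul_eq_mul, Finset.mul_sum]
        refine Finset.sum_congr rfl ?_
        rintro ⟨k, l⟩ hkl
        rw [Finset.HasAntidiagonal.mem_antidiagonal] at hkl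
        rw [← hkl, pow_add]; ring
      rwa [hfun] at hhs
    · have h2 : HasSum (fun n : ℕ => if n = 0 then (2:ℝ) else 0) 2 := by
        simpa using hasSum_ite_eq 0 (2:ℝ)
      have hfun : (fun n : ℕ => t ^ n • (if n = 0 then (2:ℝ) else 0))
          = fun n : ℕ => if n = 0 then (2:ℝ) else 0 := by
        funext n; by_cases hn : n = 0 <;> simp [hn]
      rw [hfun]; exact h2
  have key := coeffs_eq_of_hasSum (𝕜 := ℝ) (F := ℝ) hr hside
  intro n
  have hkey := key n
  rw [Finset.Nat.sum_antidiagonal_eq_sum_range_succ_mk] at hkey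
  have hsplit : ∀ k ∈ range (n + 1), c k * d (n - k)
      = (E k : ℝ) / (k.factorial * (n - k).factorial)
        + (if k = n then (E n : ℝ) / n.factorial else 0) := by
    intro k hk
    rw [mem_range] at hk
    have hkn : k ≤ n := Nat.lt_succ_iff.mp hk
    rw [hc, hd]
    by_cases hkn' : k = n
    · subst hkn'; simp [Nat.sub_self]; ring
    · have : n - k ≠ 0 := by omega
      simp [this, hkn']; ring
  rw [Finset.sum_congr rfl hsplit, Finset.sum_add_distrib,
    Finset.sum_ite_eq' (range (n+1)) n, if_pos (mem_range.mpr (Nat.lt_succ_self n))] at hkey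
  have hn0 : (n.factorial : ℝ) ≠ 0 := by exact_mod_cast n.factorial_ne_zero
  have hmul := congrArg (fun x : ℝ => (n.factorial : ℝ) * x) hkey
  simp only [mul_add, Finset.mul_sum] at hmul
  have hterm : ∀ k ∈ range (n + 1),
      (n.factorial : ℝ) * ((E k : ℝ) / (k.factorial * (n - k).factorial))
        = (n.choose k : ℝ) * (E k : ℝ) := by
    intro k hk
    rw [mem_range] at hk
    have hkn : k ≤ n := Nat.lt_succ_iff.mp hk
    have hfac : ((n.choose k : ℝ)) * (k.factorial : ℝ) * ((n - k).factorial : ℝ)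
        = (n.factorial : ℝ) := by
      exact_mod_cast Nat.choose_mul_factorial_mul_factorial hkn
    rw [← hfac]
    have h1 : (k.factorial : ℝ) ≠ 0 := by exact_mod_cast k.factorial_ne_zero
    have h2 : ((n - k).factorial : ℝ) ≠ 0 := by exact_mod_cast (n - k).factorial_ne_zero
    field_simp
  rw [Finset.sum_congr rfl hterm] at hmul
  rw [mul_div_cancel₀ _ hn0] at hmul
  convert hmul using 1
  by_cases hn : n = 0 <;> simp [hn]

private def Qpoly (E : ℕ → ℚ) (n : ℕ) (x : ℚ) : ℚ :=
  ∑ k ∈ range (n + 1), (n.choose k : ℚ) * E k * x ^ (n - k)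

private lemma choose_swap {n k j : ℕ} (h : k + j ≤ n) :
    n.choose k * (n - k).choose j = n.choose j * (n - j).choose k := by
  have h1 := Nat.choose_mul (n := n) (Nat.le_add_right k j)
  have h2 := Nat.choose_mul (n := n) (Nat.le_add_left j k)
  rw [Nat.add_sub_cancel_left] at h1
  rw [Nat.add_sub_cancel] at h2
  have h3 : (k + j).choose k = (k + j).choose j := by
    rw [← Nat.choose_symm (Nat.le_add_right k j), Nat.add_sub_cancel_left]
  rw [h3, h2] at h1
  linarith [h1]

private lemma sum_pow_zero_eval {K : Type*} [Field K] (c : ℕ → K) (n : ℕ) :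
    ∑ k ∈ range (n + 1), c k * (0:K) ^ (n - k) = c n := by
  have h : ∀ k ∈ range (n + 1), c k * (0:K) ^ (n - k) = if k = n then c k else 0 := by
    intro k hk
    rw [mem_range] at hk
    by_cases hkn : k = n
    · subst hkn; simp
    · have : n - k ≠ 0 := by omega
      simp [zero_pow this, hkn]
  rw [Finset.sum_congr rfl h, Finset.sum_ite_eq' (range (n + 1)) n,
    if_pos (mem_range.mpr (Nat.lt_succ_self n))]

private lemma Qpoly_zero (E : ℕ → ℚ) (n : ℕ) : Qpoly E n 0 = E n := by
  rw [Qpoly, sum_pow_zero_eval]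
  simp

private lemma Qpoly_step (E : ℕ → ℚ)
    (hrec : ∀ n, (∑ k ∈ range (n + 1), (n.choose k : ℚ) * E k) + E n
      = if n = 0 then 2 else 0) (n : ℕ) (x : ℚ) :
    Qpoly E n (x + 1) = 2 * x ^ n - Qpoly E n x := by
  have h1 : Qpoly E n (x + 1)
      = ∑ k ∈ range (n + 1), ∑ j ∈ range (n - k + 1),
          (n.choose k : ℚ) * E k * (((n - k).choose j : ℚ) * x ^ j) := by
    rw [Qpoly]
    refine Finset.sum_congr rfl fun k _ => ?_
    rw [add_pow, Finset.mul_sum]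
    refine Finset.sum_congr rfl fun j _ => ?_
    simp only [one_pow]
    ring
  rw [h1, Finset.sum_comm' (t' := range (n + 1)) (s' := fun j => range (n - j + 1))
    (by intro k j; simp only [mem_range]; omega)]
  have h2 : ∀ j ∈ range (n + 1),
      (∑ k ∈ range (n - j + 1), (n.choose k : ℚ) * E k * (((n - k).choose j : ℚ) * x ^ j))
      = (n.choose j : ℚ) * x ^ j * ((if j = n then 2 else 0) - E (n - j)) := by
    intro j hj
    rw [mem_range] at hj
    have hjn : j ≤ n := Nat.lt_succ_iff.mp hj
    have h3 : ∀ k ∈ range (n - j + 1),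
        (n.choose k : ℚ) * E k * (((n - k).choose j : ℚ) * x ^ j)
        = (n.choose j : ℚ) * x ^ j * (((n - j).choose k : ℚ) * E k) := by
      intro k hk
      rw [mem_range] at hk
      have hkj : k + j ≤ n := by omega
      have hc : (n.choose k : ℚ) * ((n - k).choose j : ℚ)
          = (n.choose j : ℚ) * ((n - j).choose k : ℚ) := by exact_mod_cast choose_swap hkj
      calc (n.choose k : ℚ) * E k * (((n - k).choose j : ℚ) * x ^ j)
          = ((n.choose k : ℚ) * ((n - k).choose j : ℚ)) * E k * x ^ j := by ring
        _ = ((n.choose j : ℚ) * ((n - j).choose k : ℚ)) * E k * x ^ j := by rw [hc]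
        _ = (n.choose j : ℚ) * x ^ j * (((n - j).choose k : ℚ) * E k) := by ring
    rw [Finset.sum_congr rfl h3, ← Finset.mul_sum]
    have h4 : (∑ k ∈ range (n - j + 1), ((n - j).choose k : ℚ) * E k)
        = (if j = n then 2 else 0) - E (n - j) := by
      have hthis := hrec (n - j)
      have hiff : (n - j = 0) = (j = n) := by
        apply propext; constructor <;> intro <;> omega
      simp only [hiff] at hthis
      linarith [hthis]
    rw [h4]
  rw [Finset.sum_congr rfl h2]
  have h5 : (∑ j ∈ range (n + 1),
        (n.choose j : ℚ) * x ^ j * ((if j = n then 2 else 0) - E (n - j)))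
      = (∑ j ∈ range (n + 1), (if j = n then 2 * x ^ n else 0))
        - ∑ j ∈ range (n + 1), (n.choose j : ℚ) * E (n - j) * x ^ j := by
    rw [← Finset.sum_sub_distrib]
    refine Finset.sum_congr rfl fun j hj => ?_
    rw [mem_range] at hj
    by_cases hjn : j = n
    · subst hjn; simp [Nat.choose_self]; ring
    · simp [hjn]; ring
  rw [h5, Finset.sum_ite_eq' (range (n + 1)) n, if_pos (mem_range.mpr (Nat.lt_succ_self n))]
  congr 1
  have h6 : ∀ j ∈ range (n + 1), (n.choose j : ℚ) * E (n - j) * x ^ j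
      = (fun i => (n.choose i : ℚ) * E i * x ^ (n - i)) (n - j) := by
    intro j hj
    rw [mem_range] at hj
    have hjn : j ≤ n := Nat.lt_succ_iff.mp hj
    simp only []
    rw [Nat.choose_symm hjn]
    congr 2
    omega
  rw [Finset.sum_congr rfl h6]
  have h7 := Finset.sum_range_reflect (fun i => (n.choose i : ℚ) * E i * x ^ (n - i)) (n + 1)
  simp only [Nat.add_sub_cancel] at h7
  rw [Qpoly, ← h7]

private lemma Qpoly_telescope (E : ℕ → ℚ)
    (hrec : ∀ n, (∑ k ∈ range (n + 1), (n.choose k : ℚ) * E k) + E n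
      = if n = 0 then 2 else 0) (n : ℕ) :
    ∀ m : ℕ, 2 * ∑ υ ∈ range m, (-1:ℚ) ^ υ * (υ:ℚ) ^ n
      = E n - (-1:ℚ) ^ m * Qpoly E n m := by
  intro m
  induction m with
  | zero => simp [Qpoly_zero]
  | succ m ih =>
    rw [Finset.sum_range_succ, mul_add, ih]
    have hstep := Qpoly_step E hrec n (m:ℚ)
    push_cast
    rw [hstep]
    ring

end WittAux

/-- Witt's formula: the fermionic p-adic integral of `υ ^ n` is the Euler number `E n`,
and `A_n(-1,b) = (ln b)^n 2^n E_n`. -/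
theorem genEulerian_witt_formula
    (A : ℂ → ℝ → ℕ → ℂ)
    (hA : ∀ (a : ℂ) (b : ℝ), 0 < b → a ≠ 1 → ∃ r > (0:ℝ), ∀ t : ℂ, ‖t‖ < r →
      HasSum (fun n : ℕ => A a b n * t ^ n / (n.factorial : ℂ))
        ((1 - a) / (Complex.exp (t * (1 - a) * (Real.log b : ℂ)) - a)))
    (E : ℕ → ℚ)
    (hE : ∃ r > (0:ℝ), ∀ t : ℝ, |t| < r →
      HasSum (fun n : ℕ => (E n : ℝ) * t ^ n / (n.factorial : ℝ)) (2 / (Real.exp t + 1)))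
    (p : ℕ) [Fact p.Prime] (hp : Odd p)
    (b : ℝ) (hb : 0 < b) (n : ℕ) :
    Tendsto (fun N : ℕ => ∑ υ ∈ Finset.range (p ^ N), (-1 : ℚ_[p]) ^ υ * (υ : ℚ_[p]) ^ n)
        atTop (𝓝 ((E n : ℚ_[p]))) ∧
      A (-1) b n = (Real.log b : ℂ) ^ n * 2 ^ n * ((E n : ℚ) : ℂ) := by
  obtain ⟨rE, hrE, hsumE⟩ := hE
  have hrecR := witt_euler_recurrence hrE hsumE
  have hrec : ∀ m, (∑ k ∈ range (m + 1), (m.choose k : ℚ) * E k) + E m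
      = if m = 0 then 2 else 0 := by
    intro m
    have h := hrecR m
    by_cases hm : m = 0
    · rw [if_pos hm] at h ⊢; exact_mod_cast h
    · rw [if_neg hm] at h ⊢; exact_mod_cast h
  constructor
  · -- p-adic part
    have tele := Qpoly_telescope E hrec n
    have hseq : ∀ N : ℕ, (∑ υ ∈ Finset.range (p ^ N), (-1 : ℚ_[p]) ^ υ * (υ : ℚ_[p]) ^ n)
        = ((E n : ℚ_[p]) + ∑ k ∈ range (n + 1),
            (n.choose k : ℚ_[p]) * (E k : ℚ_[p]) * ((p : ℚ_[p]) ^ N) ^ (n - k)) / 2 := by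
      intro N
      have hodd : Odd (p ^ N) := hp.pow
      have h1 := tele (p ^ N)
      rw [Odd.neg_one_pow hodd] at h1
      have h2 : (∑ υ ∈ range (p ^ N), (-1:ℚ) ^ υ * (υ:ℚ) ^ n)
          = (E n + Qpoly E n ((p ^ N : ℕ) : ℚ)) / 2 := by linarith [h1]
      rw [Qpoly] at h2
      have h3 := congrArg (fun q : ℚ => (q : ℚ_[p])) h2
      push_cast at h3
      exact h3
    simp only [hseq]
    have hpow : Tendsto (fun N : ℕ => (p : ℚ_[p]) ^ N) atTop (𝓝 0) :=
      tendsto_pow_atTop_nhds_zero_of_norm_lt_one Padic.norm_p_lt_one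
    have hcont : Continuous (fun x : ℚ_[p] => ((E n : ℚ_[p]) + ∑ k ∈ range (n + 1),
        (n.choose k : ℚ_[p]) * (E k : ℚ_[p]) * x ^ (n - k)) / 2) := by
      apply Continuous.div_const
      apply continuous_const.fun_add
      exact continuous_finset_sum _ fun k _ => (continuous_const.fun_mul (continuous_pow (n - k)))
    have hlim := (hcont.tendsto 0).comp hpow
    have hval : ((E n : ℚ_[p]) + ∑ k ∈ range (n + 1),
        (n.choose k : ℚ_[p]) * (E k : ℚ_[p]) * (0:ℚ_[p]) ^ (n - k)) / 2 = (E n : ℚ_[p]) := by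
      rw [sum_pow_zero_eval (fun k => (n.choose k : ℚ_[p]) * (E k : ℚ_[p])) n]
      rw [Nat.choose_self]
      push_cast
      ring
    rw [hval] at hlim
    exact hlim
  · -- complex part
    obtain ⟨rA, hrA, hsumA⟩ := hA (-1) b hb (by norm_num)
    set L := Real.log b with hL
    have hden : (0:ℝ) < 2 * |L| + 1 := by positivity
    set r' := min rA (rE / (2 * |L| + 1)) with hr'
    have hr0 : 0 < r' := lt_min hrA (div_pos hrE hden)
    have hside : ∀ t : ℝ, ‖t‖ < r' → ∃ s,
        HasSum (fun m => t ^ m • (A (-1) b m / (m.factorial : ℂ))) s ∧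
        HasSum (fun m => t ^ m • ((E m : ℂ) * (2 * (L:ℂ)) ^ m / (m.factorial : ℂ))) s := by
      intro t ht
      rw [Real.norm_eq_abs] at ht
      have ht1 : |t| < rA := lt_of_lt_of_le ht (min_le_left _ _)
      have ht2 : |2 * L * t| < rE := by
        have h1 : |t| < rE / (2 * |L| + 1) := lt_of_lt_of_le ht (min_le_right _ _)
        have h2 : |2 * L * t| = 2 * |L| * |t| := by
          rw [abs_mul, abs_mul]; simp [abs_of_pos]
        rw [h2]
        calc 2 * |L| * |t| ≤ (2 * |L| + 1) * |t| := by nlinarith [abs_nonneg t]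
          _ < (2 * |L| + 1) * (rE / (2 * |L| + 1)) := by
              apply mul_lt_mul_of_pos_left h1 hden
          _ = rE := by field_simp
      refine ⟨2 / (Complex.exp ((t:ℂ) * 2 * (L:ℂ)) + 1), ?_, ?_⟩
      · have h1 := hsumA (t:ℂ) (by rwa [Complex.norm_real, Real.norm_eq_abs])
        have e1 : (1 : ℂ) - (-1) = 2 := by norm_num
        rw [e1, sub_neg_eq_add] at h1
        have hfun : (fun m => (t:ℝ) ^ m • (A (-1) b m / (m.factorial : ℂ)))
            = fun m => A (-1) b m * (t:ℂ) ^ m / (m.factorial : ℂ) := by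
          funext m
          rw [Complex.real_smul]
          push_cast
          ring
        rw [hfun]
        exact h1
      · have h2 := Complex.hasSum_ofReal.mpr (hsumE (2 * L * t) ht2)
        have hfun : (fun m => (((E m : ℝ) * (2 * L * t) ^ m / (m.factorial : ℝ) : ℝ) : ℂ))
            = fun m => (t:ℝ) ^ m • ((E m : ℂ) * (2 * (L:ℂ)) ^ m / (m.factorial : ℂ)) := by
          funext m
          rw [Complex.real_smul]
          push_cast
          ring
        have hsumval : (((2 / (Real.exp (2 * L * t) + 1) : ℝ)) : ℂ)
            = 2 / (Complex.exp ((t:ℂ) * 2 * (L:ℂ)) + 1) := by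
          push_cast [Complex.ofReal_exp]
          rw [show ((2:ℂ) * (L:ℂ) * (t:ℂ)) = (t:ℂ) * 2 * (L:ℂ) by ring]
        rw [hfun, hsumval] at h2
        exact h2
    have key := coeffs_eq_of_hasSum (𝕜 := ℝ) (F := ℂ) hr0 hside n
    have hn0 : ((n.factorial : ℂ)) ≠ 0 := by exact_mod_cast n.factorial_ne_zero
    have hA' : A (-1) b n = (E n : ℂ) * (2 * (L:ℂ)) ^ n := by
      field_simp at key
      exact key
    rw [hA', mul_pow]
    ring
end
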